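/- arXiv:1010.3368 — 6 statements merged into one kernel-verified Lean document; each statement's English description precedes it below -/
import Mathlib

section
/- For a metric space (X,d) with a bornology 𝔅, the selection principles α₂(Γ_{𝔅^s},Γ_{𝔅^s}), α₃(Γ_{𝔅^s},Γ_{𝔅^s}), α₄(Γ_{𝔅^s},Γ_{𝔅^s}) and S₁(Γ_{𝔅^s},Γ_{𝔅^s}) are all equivalent. -/
open Set Metric

variable {X : Type*} [MetricSpace X]

/-- The δ-enlargement of a set `B`: union of open δ-balls around points of `B`. -/
def enl (B : Set X) (δ : ℝ) : Set X := ⋃ b ∈ B, Metric.ball b δ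

/-- A bornology (in the sense of Hu/Hogbe-Nlend): a family of nonempty subsets
covering `X`, closed under finite unions and hereditary. -/
def IsBorn (𝔅 : Set (Set X)) : Prop :=
  (∀ B ∈ 𝔅, B.Nonempty) ∧ (⋃₀ 𝔅 = Set.univ) ∧
  (∀ B₁ ∈ 𝔅, ∀ B₂ ∈ 𝔅, B₁ ∪ B₂ ∈ 𝔅) ∧
  (∀ B ∈ 𝔅, ∀ A : Set X, A ⊆ B → A.Nonempty → A ∈ 𝔅)

/-- The bornology has a base consisting of closed sets. -/
def HasClosedBase (𝔅 : Set (Set X)) : Prop :=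
  ∃ 𝔅₀ ⊆ 𝔅, (∀ B ∈ 𝔅₀, IsClosed B) ∧ ∀ B ∈ 𝔅, ∃ B₀ ∈ 𝔅₀, B ⊆ B₀

/-- A strong 𝔅-cover (𝔅ˢ-cover): an open cover 𝒰 of X with X ∉ 𝒰 such that for
every `B ∈ 𝔅` some δ-enlargement of `B` lies in a member of 𝒰. -/
def IsBsCover (𝔅 : Set (Set X)) (𝒰 : Set (Set X)) : Prop :=
  (∀ U ∈ 𝒰, IsOpen U) ∧ Set.univ ∉ 𝒰 ∧ ⋃₀ 𝒰 = Set.univ ∧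
  ∀ B ∈ 𝔅, ∃ U ∈ 𝒰, ∃ δ > 0, enl B δ ⊆ U

/-- A γ_{𝔅ˢ}-cover: an infinite countable open cover `(U n)` such that for every
`B ∈ 𝔅` there are `n₀` and positive reals `δ n` (for `n ≥ n₀`) with
`enl B (δ n) ⊆ U n` for all `n ≥ n₀`. -/
def IsGammaCover (𝔅 : Set (Set X)) (U : ℕ → Set X) : Prop :=
  (∀ n, IsOpen (U n)) ∧ (⋃ n, U n) = Set.univ ∧ (Set.range U).Infinite ∧
  ∀ B ∈ 𝔅, ∃ n₀ : ℕ, ∃ δ : ℕ → ℝ, ∀ n ≥ n₀, 0 < δ n ∧ enl B (δ n) ⊆ U n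

/-- `g` belongs to the basic τˢ_𝔅-neighborhood `[B,ε]ˢ(f)`. -/
def SNbhd (B : Set X) (ε : ℝ) (f g : C(X, ℝ)) : Prop :=
  ∃ δ > 0, ∀ x ∈ enl B δ, |g x - f x| < ε

/-- `f` lies in the τˢ_𝔅-closure of `A`. -/
def SCl (𝔅 : Set (Set X)) (A : Set C(X, ℝ)) (f : C(X, ℝ)) : Prop :=
  ∀ B ∈ 𝔅, ∀ ε > 0, ∃ g ∈ A, SNbhd B ε f g

/-- The sequence `g` τˢ_𝔅-converges to `f`. -/
def SConv (𝔅 : Set (Set X)) (g : ℕ → C(X, ℝ)) (f : C(X, ℝ)) : Prop :=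
  ∀ B ∈ 𝔅, ∀ ε > 0, ∃ N : ℕ, ∀ n ≥ N, SNbhd B ε f (g n)

/-- S₁(Γ_{𝔅ˢ},Γ_{𝔅ˢ}). -/
def S1Gamma (𝔅 : Set (Set X)) : Prop :=
  ∀ U : ℕ → ℕ → Set X, (∀ n, IsGammaCover 𝔅 (U n)) →
    ∃ f : ℕ → ℕ, IsGammaCover 𝔅 (fun n => U n (f n))

/-- α₂(Γ_{𝔅ˢ},Γ_{𝔅ˢ}). -/
def Alpha2Gamma (𝔅 : Set (Set X)) : Prop :=
  ∀ U : ℕ → ℕ → Set X, (∀ n, IsGammaCover 𝔅 (U n)) →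
    ∃ V : ℕ → Set X, IsGammaCover 𝔅 V ∧
      ∀ n, (Set.range V ∩ Set.range (U n)).Infinite

/-- α₃(Γ_{𝔅ˢ},Γ_{𝔅ˢ}). -/
def Alpha3Gamma (𝔅 : Set (Set X)) : Prop :=
  ∀ U : ℕ → ℕ → Set X, (∀ n, IsGammaCover 𝔅 (U n)) →
    ∃ V : ℕ → Set X, IsGammaCover 𝔅 V ∧
      {n | (Set.range V ∩ Set.range (U n)).Infinite}.Infinite

/-- α₄(Γ_{𝔅ˢ},Γ_{𝔅ˢ}). -/
def Alpha4Gamma (𝔅 : Set (Set X)) : Prop :=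
  ∀ U : ℕ → ℕ → Set X, (∀ n, IsGammaCover 𝔅 (U n)) →
    ∃ V : ℕ → Set X, IsGammaCover 𝔅 V ∧
      {n | (Set.range V ∩ Set.range (U n)).Nonempty}.Infinite

section Aux

variable {𝔅 : Set (Set X)}

/-- The core "γ" condition. -/
def GC (𝔅 : Set (Set X)) (U : ℕ → Set X) : Prop :=
  ∀ B ∈ 𝔅, ∃ n₀ : ℕ, ∃ δ : ℕ → ℝ, ∀ n ≥ n₀, 0 < δ n ∧ enl B (δ n) ⊆ U n

lemma gc_of_gamma {U : ℕ → Set X} (h : IsGammaCover 𝔅 U) : GC 𝔅 U := h.2.2.2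

lemma born_singleton (h𝔅 : IsBorn 𝔅) (x : X) : ({x} : Set X) ∈ 𝔅 := by
  obtain ⟨h1, h2, h3, h4⟩ := h𝔅
  have hx : x ∈ ⋃₀ 𝔅 := h2 ▸ mem_univ x
  obtain ⟨B, hB, hxB⟩ := hx
  exact h4 B hB {x} (by simpa) ⟨x, rfl⟩

lemma enl_mono {B : Set X} {δ δ' : ℝ} (h : δ ≤ δ') : enl B δ ⊆ enl B δ' :=
  iUnion₂_mono fun b _ => ball_subset_ball h

lemma self_mem_enl {B : Set X} {x : X} (hx : x ∈ B) {δ : ℝ} (hδ : 0 < δ) : x ∈ enl B δ :=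
  mem_biUnion hx (mem_ball_self hδ)

lemma gc_union (h𝔅 : IsBorn 𝔅) {U : ℕ → Set X} (h : GC 𝔅 U) : (⋃ n, U n) = univ := by
  apply eq_univ_of_forall
  intro x
  obtain ⟨n₀, δ, hδ⟩ := h {x} (born_singleton h𝔅 x)
  obtain ⟨hpos, hsub⟩ := hδ n₀ le_rfl
  exact mem_iUnion.2 ⟨n₀, hsub (self_mem_enl (Set.mem_singleton x) hpos)⟩

lemma gc_fiber (h𝔅 : IsBorn 𝔅) {U : ℕ → Set X} (h : GC 𝔅 U) {T : Set X}
    (hT : {m | U m = T}.Infinite) : T = univ := by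
  apply eq_univ_of_forall
  intro x
  obtain ⟨n₀, δ, hδ⟩ := h {x} (born_singleton h𝔅 x)
  obtain ⟨m, hm, hmlt⟩ := hT.exists_gt n₀
  obtain ⟨hpos, hsub⟩ := hδ m hmlt.le
  exact hm ▸ hsub (self_mem_enl (Set.mem_singleton x) hpos)

lemma gc_range_infinite (h𝔅 : IsBorn 𝔅) {U : ℕ → Set X} (h : GC 𝔅 U)
    (hne : ∀ n, U n ≠ univ) : (Set.range U).Infinite := by
  rw [← Set.infinite_coe_iff]
  by_contra hfin
  rw [not_infinite_iff_finite] at hfin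
  have hfinr : (Set.range U).Finite := Set.toFinite _
  have huniv : (Set.univ : Set ℕ).Finite := by
    have : (Set.univ : Set ℕ) ⊆ ⋃ T ∈ Set.range U, U ⁻¹' {T} := by
      intro m _
      exact mem_biUnion (mem_range_self m) rfl
    refine Set.Finite.subset (hfinr.biUnion fun T hT => ?_) this
    by_contra hinf
    rw [← Set.not_infinite, not_not] at hinf
    obtain ⟨m, rfl⟩ := hT
    exact hne m (gc_fiber h𝔅 h hinf)
  exact Set.infinite_univ huniv

lemma gamma_of_gc (h𝔅 : IsBorn 𝔅) {U : ℕ → Set X} (hop : ∀ n, IsOpen (U n))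
    (hgc : GC 𝔅 U) (hne : ∀ n, U n ≠ univ) : IsGammaCover 𝔅 U :=
  ⟨hop, gc_union h𝔅 hgc, gc_range_infinite h𝔅 hgc hne, hgc⟩

lemma gc_comp {U : ℕ → Set X} (h : GC 𝔅 U) {e : ℕ → ℕ} (he : ∀ n, n ≤ e n) :
    GC 𝔅 (fun n => U (e n)) := by
  intro B hB
  obtain ⟨n₀, δ, hδ⟩ := h B hB
  exact ⟨n₀, fun n => δ (e n), fun n hn => hδ (e n) (le_trans hn (he n))⟩

lemma exists_strictMono_mem {S : Set ℕ} (hS : S.Infinite) :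
    ∃ e : ℕ → ℕ, StrictMono e ∧ ∀ n, e n ∈ S := by
  classical
  haveI := hS.to_subtype
  refine ⟨Nat.orderEmbeddingOfSet S, (Nat.orderEmbeddingOfSet S).strictMono, fun n => ?_⟩
  have : Nat.orderEmbeddingOfSet S n ∈ Set.range (Nat.orderEmbeddingOfSet S) :=
    mem_range_self n
  rwa [Nat.orderEmbeddingOfSet_range] at this

/-- pass to a subsequence avoiding `univ`. -/
lemma exists_univfree (h𝔅 : IsBorn 𝔅) {U : ℕ → Set X} (hU : IsGammaCover 𝔅 U) :
    ∃ e : ℕ → ℕ, StrictMono e ∧ IsGammaCover 𝔅 (fun n => U (e n)) ∧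
      ∀ n, U (e n) ≠ univ := by
  have hS : {m | U m ≠ univ}.Infinite := by
    by_contra hfin
    rw [Set.not_infinite] at hfin
    have : Set.range U ⊆ (U '' {m | U m ≠ univ}) ∪ {univ} := by
      rintro T ⟨m, rfl⟩
      by_cases h : U m = univ
      · exact Or.inr h
      · exact Or.inl ⟨m, h, rfl⟩
    exact hU.2.2.1 (((hfin.image U).union (finite_singleton _)).subset this)
  obtain ⟨e, hmono, hmem⟩ := exists_strictMono_mem hS
  have hgc : GC 𝔅 (fun n => U (e n)) := gc_comp (gc_of_gamma hU) fun n => hmono.le_apply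
  exact ⟨e, hmono, gamma_of_gc h𝔅 (fun n => hU.1 (e n)) hgc (fun n => hmem n), fun n => hmem n⟩

/-- diagonal picking of pairwise distinct elements. -/
noncomputable def pickAux {α : Type*} [Nonempty α] (R : ℕ → Set α) : ℕ → α
  | t => Classical.epsilon fun y => y ∈ R (Nat.unpair t).1 ∧ ∀ s, s < t → y ≠ pickAux R s
  termination_by t => t
  decreasing_by assumption

lemma pickAux_spec {α : Type*} [Nonempty α] (R : ℕ → Set α) (hR : ∀ n, (R n).Infinite)
    (t : ℕ) :
    pickAux R t ∈ R (Nat.unpair t).1 ∧ ∀ s, s < t → pickAux R t ≠ pickAux R s := by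
  have hex : ∃ y, y ∈ R (Nat.unpair t).1 ∧ ∀ s, s < t → y ≠ pickAux R s := by
    obtain ⟨y, hy1, hy2⟩ := ((hR _).diff ((Set.finite_Iio t).image (pickAux R))).nonempty
    refine ⟨y, hy1, fun s hs hE => hy2 ?_⟩
    exact ⟨s, hs, hE.symm⟩
  rw [pickAux]
  exact Classical.epsilon_spec hex

lemma pickAux_injective {α : Type*} [Nonempty α] (R : ℕ → Set α)
    (hR : ∀ n, (R n).Infinite) : Function.Injective (pickAux R) := by
  intro s t h
  rcases lt_trichotomy s t with hst | hst | hst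
  · exact absurd h.symm ((pickAux_spec R hR t).2 s hst)
  · exact hst
  · exact absurd h ((pickAux_spec R hR s).2 t hst)

end Aux

section Main
variable {𝔅 : Set (Set X)}

lemma fib_infinite (n : ℕ) : {k : ℕ | (Nat.unpair k).1 = n}.Infinite := by
  apply Set.infinite_of_injective_forall_mem (f := fun j => Nat.pair n j)
  · intro a b h
    have := congrArg (fun t => (Nat.unpair t).2) h
    simpa using this
  · intro j
    simp [Set.mem_setOf_eq]

lemma s1_to_alpha2 (h𝔅 : IsBorn 𝔅) (h : S1Gamma 𝔅) : Alpha2Gamma 𝔅 := by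
  intro U hU
  choose e0 he0mono hγ0 hne0 using fun n => exists_univfree h𝔅 (hU n)
  set U0 : ℕ → ℕ → Set X := fun n m => U n (e0 n m) with hU0def
  obtain ⟨f, hV⟩ := h (fun k => U0 (Nat.unpair k).1) (fun k => hγ0 _)
  set V : ℕ → Set X := fun k => U0 (Nat.unpair k).1 (f k) with hVdef
  refine ⟨V, hV, fun n => ?_⟩
  have himg : (V '' {k | (Nat.unpair k).1 = n}).Infinite := by
    by_contra hfin
    rw [Set.not_infinite] at hfin
    have hcover : {k | (Nat.unpair k).1 = n} ⊆
        ⋃ T ∈ V '' {k | (Nat.unpair k).1 = n}, {k | (Nat.unpair k).1 = n} ∩ V ⁻¹' {T} := by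
      intro k hk
      exact mem_biUnion (mem_image_of_mem V hk) ⟨hk, rfl⟩
    have : ({k | (Nat.unpair k).1 = n}).Finite := by
      refine Set.Finite.subset (hfin.biUnion fun T hT => ?_) hcover
      by_contra hinf
      rw [← Set.not_infinite, not_not] at hinf
      have hTuniv : T = univ := by
        apply gc_fiber h𝔅 (gc_of_gamma hV)
        exact hinf.mono fun k hk => hk.2
      obtain ⟨k, hk, hVk⟩ := hT
      rw [hTuniv] at hVk
      have : (Nat.unpair k).1 = n := hk
      exact hne0 n (f k) (by rw [← this]; exact hVk)
    exact fib_infinite n this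
  refine himg.mono ?_
  rintro T ⟨k, hk, rfl⟩
  refine ⟨⟨k, rfl⟩, ?_⟩
  have : (Nat.unpair k).1 = n := hk
  exact ⟨e0 n (f k), by rw [hVdef]; simp only; rw [this]⟩

end Main

section Main2
variable {𝔅 : Set (Set X)}

lemma alpha4_to_s1 (h𝔅 : IsBorn 𝔅) (h : Alpha4Gamma 𝔅) : S1Gamma 𝔅 := by
  intro U hU
  haveI : Nonempty (Set X) := ⟨∅⟩
  choose e0 he0mono hγ0 hne0 using fun n => exists_univfree h𝔅 (hU n)
  set U0 : ℕ → ℕ → Set X := fun n m => U n (e0 n m) with hU0def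
  have hop0 : ∀ n m, IsOpen (U0 n m) := fun n m => (hγ0 n).1 m
  have hgc0 : ∀ n, GC 𝔅 (U0 n) := fun n => gc_of_gamma (hγ0 n)
  -- intersection covers
  set W : ℕ → ℕ → Set X := fun n m => ⋂ i ∈ Finset.range (n+1), U0 i m with hWdef
  have hWsub : ∀ n m i, i ≤ n → W n m ⊆ U0 i m := fun n m i hi =>
    Set.biInter_subset_of_mem (Finset.mem_range.2 (Nat.lt_succ_of_le hi))
  have hopW : ∀ n m, IsOpen (W n m) := fun n m => isOpen_biInter_finset fun i _ => hop0 i m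
  have hneW : ∀ n m, W n m ≠ univ := by
    intro n m heq
    have := hWsub n m 0 (Nat.zero_le n)
    rw [heq] at this
    exact hne0 0 m (eq_univ_of_univ_subset this)
  have hgcW : ∀ n, GC 𝔅 (W n) := by
    intro n B hB
    choose n0 δ hδ using fun i => hgc0 i B hB
    refine ⟨(Finset.range (n+1)).sup n0,
      fun m => (Finset.range (n+1)).inf' Finset.nonempty_range_add_one (fun i => δ i m),
      fun m hm => ⟨?_, ?_⟩⟩
    · rw [Finset.lt_inf'_iff]
      intro i hi
      exact (hδ i m (le_trans (Finset.le_sup hi) hm)).1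
    · intro y hy
      refine Set.mem_iInter₂.2 fun i hi => ?_
      exact (hδ i m (le_trans (Finset.le_sup hi) hm)).2
        (enl_mono (Finset.inf'_le _ hi) hy)
  -- disjoint refinement of the W's
  have hRinf : ∀ n, (Set.range (W n)).Infinite := fun n =>
    gc_range_infinite h𝔅 (hgcW n) (hneW n)
  set x : ℕ → Set X := pickAux (fun n => Set.range (W n)) with hxdef
  have hxspec := pickAux_spec (fun n => Set.range (W n)) hRinf
  have hxinj := pickAux_injective (fun n => Set.range (W n)) hRinf
  set A : ℕ → Set (Set X) := fun n => x '' {t | (Nat.unpair t).1 = n} with hAdef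
  have hxmem : ∀ t, x t ∈ Set.range (W (Nat.unpair t).1) := fun t => (hxspec t).1
  have hAdisj : ∀ n n', n ≠ n' → ∀ a, a ∈ A n → a ∈ A n' → False := by
    rintro n n' hnn a ⟨t, ht, rfl⟩ ⟨t', ht', hE⟩
    have htt : t' = t := hxinj hE
    apply hnn
    rw [← ht]
    rw [← ht']
    rw [htt]
  set M : ℕ → Set ℕ := fun n => {m | W n m ∈ A n} with hMdef
  have hMinf : ∀ n, (M n).Infinite := by
    intro n
    by_contra hfin
    rw [Set.not_infinite] at hfin
    have hsub : A n ⊆ W n '' M n := by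
      rintro a ⟨t, ht, rfl⟩
      have ht' : (Nat.unpair t).1 = n := ht
      have hx' := hxmem t
      rw [ht'] at hx'
      obtain ⟨m, hm⟩ := hx'
      refine ⟨m, ?_, hm⟩
      show W n m ∈ A n
      rw [hm]
      exact ⟨t, ht, rfl⟩
    have hAinf : (A n).Infinite := (fib_infinite n).image hxinj.injOn
    exact hAinf ((hfin.image (W n)).subset hsub)
  choose e2 he2mono he2mem using fun n => exists_strictMono_mem (hMinf n)
  set W1 : ℕ → ℕ → Set X := fun n m => W n (e2 n m) with hW1def
  have hγW1 : ∀ n, IsGammaCover 𝔅 (W1 n) := fun n =>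
    gamma_of_gc h𝔅 (fun m => hopW n _) (gc_comp (hgcW n) fun m => (he2mono n).le_apply)
      (fun m => hneW n _)
  have hW1A : ∀ n m, W1 n m ∈ A n := fun n m => he2mem n m
  obtain ⟨V, hV, hN⟩ := h W1 hγW1
  obtain ⟨ν, hνmono, hνmem⟩ := exists_strictMono_mem hN
  choose T hT using fun j => hνmem j
  have hT1 : ∀ j, T j ∈ Set.range V := fun j => (hT j).1
  choose m2 hm2 using fun j => (hT j).2
  set m1 : ℕ → ℕ := fun j => e2 (ν j) (m2 j) with hm1def
  have hWT : ∀ j, W (ν j) (m1 j) = T j := fun j => hm2 j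
  have hTA : ∀ j, T j ∈ A (ν j) := fun j => (hm2 j) ▸ hW1A (ν j) (m2 j)
  have hTinj : Function.Injective T := by
    intro j j' hE
    by_contra hne
    exact hAdisj (ν j) (ν j') (fun hq => hne (hνmono.injective hq)) (T j) (hTA j)
      (hE ▸ hTA j')
  set S : ℕ → Set X := fun i => U0 i (m1 i) with hSdef
  have hTS : ∀ i, T i ⊆ S i := by
    intro i
    rw [← hWT i]
    exact hWsub (ν i) (m1 i) i hνmono.le_apply
  have hgcS : GC 𝔅 S := by
    intro B hB
    classical
    obtain ⟨_, _, _, hgcV⟩ := hV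
    obtain ⟨k₀, δV, hδV⟩ := hgcV B hB
    have hF : (V '' Set.Iio k₀).Finite := (Set.finite_Iio k₀).image V
    have hBad : (T ⁻¹' (V '' Set.Iio k₀)).Finite := hF.preimage hTinj.injOn
    obtain ⟨b, hb⟩ := hBad.bddAbove
    have key : ∀ i, i ≥ b + 1 → ∃ d : ℝ, 0 < d ∧ enl B d ⊆ S i := by
      intro i hi
      have hTi : T i ∉ V '' Set.Iio k₀ := by
        intro hmem
        have : i ≤ b := hb hmem
        omega
      obtain ⟨k, hk⟩ := hT1 i
      have hkk : k₀ ≤ k := by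
        by_contra hlt
        exact hTi ⟨k, Set.mem_Iio.2 (not_le.mp hlt), hk⟩
      obtain ⟨hpos, hsub⟩ := hδV k hkk
      exact ⟨δV k, hpos, fun y hy => hTS i (hk ▸ hsub hy)⟩
    refine ⟨b + 1, fun i => if hh : ∃ d : ℝ, 0 < d ∧ enl B d ⊆ S i then hh.choose else 1,
      fun i hi => ?_⟩
    have hki := key i hi
    have hrw : (fun i => if hh : ∃ d : ℝ, 0 < d ∧ enl B d ⊆ S i then hh.choose else (1:ℝ)) i
        = hki.choose := dif_pos hki
    rw [hrw]
    exact hki.choose_spec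
  have hγS : IsGammaCover 𝔅 S :=
    gamma_of_gc h𝔅 (fun i => hop0 i (m1 i)) hgcS (fun i => hne0 i (m1 i))
  exact ⟨fun i => e0 i (m1 i), hγS⟩

end Main2


theorem statement8 (𝔅 : Set (Set X)) (h𝔅 : IsBorn 𝔅) :
    (Alpha2Gamma 𝔅 ↔ Alpha3Gamma 𝔅) ∧ (Alpha3Gamma 𝔅 ↔ Alpha4Gamma 𝔅) ∧
    (Alpha4Gamma 𝔅 ↔ S1Gamma 𝔅) := by
  have i23 : Alpha2Gamma 𝔅 → Alpha3Gamma 𝔅 := by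
    intro h U hU
    obtain ⟨V, hV, hi⟩ := h U hU
    exact ⟨V, hV, Set.infinite_univ.mono fun n _ => hi n⟩
  have i34 : Alpha3Gamma 𝔅 → Alpha4Gamma 𝔅 := by
    intro h U hU
    obtain ⟨V, hV, hi⟩ := h U hU
    exact ⟨V, hV, hi.mono fun n hn => hn.nonempty⟩
  have i4S : Alpha4Gamma 𝔅 → S1Gamma 𝔅 := alpha4_to_s1 h𝔅
  have iS2 : S1Gamma 𝔅 → Alpha2Gamma 𝔅 := s1_to_alpha2 h𝔅
  exact ⟨⟨i23, fun h3 => iS2 (i4S (i34 h3))⟩,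
    ⟨i34, fun h4 => i23 (iS2 (i4S h4))⟩,
    ⟨i4S, fun hs => i34 (i23 (iS2 hs))⟩⟩
end

section
/- Let (X,d) be a metric space with a bornology 𝔅. If X satisfies S₁(Γ_{𝔅^s},Γ_{𝔅^s}), then X satisfies α₂(Γ_{𝔅^s},Γ_{𝔅^s}): for every sequence (𝒰_n : n ∈ ℕ) of γ_{𝔅^s}-covers of X there is a γ_{𝔅^s}-cover 𝒱 of X such that 𝒱 ∩ 𝒰_n is infinite for every n. -/
open Set Metric

variable {X : Type*} [MetricSpace X]

lemma singleton_mem_born {𝔅 : Set (Set X)} (h𝔅 : IsBorn 𝔅) (x : X) : {x} ∈ 𝔅 := by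
  obtain ⟨-, hcov, -, hher⟩ := h𝔅
  have hx : x ∈ ⋃₀ 𝔅 := by rw [hcov]; trivial
  obtain ⟨B, hB, hxB⟩ := hx
  exact hher B hB {x} (by simpa using hxB) ⟨x, rfl⟩

lemma mem_enl_self (x : X) {δ : ℝ} (hδ : 0 < δ) : x ∈ enl {x} δ := by
  simp [enl, Metric.mem_ball_self hδ]

lemma injective_unbounded {s : ℕ → ℕ} (hs : Function.Injective s) (N : ℕ) :
    ∃ j₀, ∀ j ≥ j₀, s j ≥ N := by
  have hfin : {j | s j < N}.Finite := by
    have heq : {j | s j < N} = s ⁻¹' (Set.Iio N) := rfl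
    rw [heq]
    exact Set.Finite.preimage hs.injOn (Set.finite_Iio N)
  obtain ⟨j₀, hj₀⟩ := hfin.bddAbove
  refine ⟨j₀ + 1, fun j hj => ?_⟩
  by_contra hlt
  push_neg at hlt
  have := hj₀ (Set.mem_setOf.mpr hlt)
  omega

lemma subseq_gamma {𝔅 : Set (Set X)} (h𝔅 : IsBorn 𝔅) {U : ℕ → Set X}
    (hU : IsGammaCover 𝔅 U) {s : ℕ → ℕ} (hs : Function.Injective s)
    (hinj : Function.Injective (fun j => U (s j))) :
    IsGammaCover 𝔅 (fun j => U (s j)) := by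
  obtain ⟨hopen, hcov, hinf, hg⟩ := hU
  refine ⟨fun j => hopen (s j), ?_, Set.infinite_range_of_injective hinj, ?_⟩
  · ext x
    simp only [Set.mem_iUnion, Set.mem_univ, iff_true]
    obtain ⟨n₀, δ, hδ⟩ := hg {x} (singleton_mem_born h𝔅 x)
    obtain ⟨j₀, hj₀⟩ := injective_unbounded hs n₀
    refine ⟨j₀, ?_⟩
    have := hδ (s j₀) (hj₀ j₀ le_rfl)
    exact this.2 (mem_enl_self x this.1)
  · intro B hB
    obtain ⟨n₀, δ, hδ⟩ := hg B hB
    obtain ⟨j₀, hj₀⟩ := injective_unbounded hs n₀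
    exact ⟨j₀, fun j => δ (s j), fun j hj => hδ (s j) (hj₀ j hj)⟩

lemma exists_injective_subseq {U : ℕ → Set X} (hinf : (Set.range U).Infinite) :
    ∃ s : ℕ → ℕ, Function.Injective s ∧ Function.Injective (fun j => U (s j)) := by
  let e := hinf.natEmbedding
  choose s hs using fun k => (e k).2
  have hUs : ∀ k, U (s k) = (e k : Set X) := hs
  refine ⟨s, ?_, ?_⟩
  · intro k k' hkk'
    apply e.injective
    ext1
    rw [← hUs, ← hUs, hkk']
  · intro k k' hkk'
    simp only at hkk'
    apply e.injective
    ext1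
    rw [← hUs, ← hUs, hkk']

lemma pair_left_injective (k : ℕ) : Function.Injective (fun j => Nat.pair k j) := by
  intro a b hab
  have := congrArg Nat.unpair hab
  simpa [Nat.unpair_pair] using this

theorem statement10 (𝔅 : Set (Set X)) (h𝔅 : IsBorn 𝔅) (h : S1Gamma 𝔅) :
    Alpha2Gamma 𝔅 := by
  intro U hU
  -- extract injective enumerations
  choose s hs hinj using fun n => exists_injective_subseq (hU n).2.2.1
  -- the doubly-indexed family of γ-covers
  set W : ℕ → ℕ → Set X := fun m j =>
    U (Nat.unpair m).1 (s (Nat.unpair m).1 (Nat.pair (Nat.unpair m).2 j)) with hW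
  have hWc : ∀ m, IsGammaCover 𝔅 (W m) := by
    intro m
    set n := (Nat.unpair m).1
    set k := (Nat.unpair m).2
    have hcomp : Function.Injective (fun j => s n (Nat.pair k j)) :=
      (hs n).comp (pair_left_injective k)
    have hcomp2 : Function.Injective (fun j => U n (s n (Nat.pair k j))) := by
      intro a b hab
      exact pair_left_injective k (hinj n hab)
    exact subseq_gamma h𝔅 (hU n) hcomp hcomp2
  obtain ⟨f, hf⟩ := h W hWc
  refine ⟨fun m => W m (f m), hf, fun n => ?_⟩
  -- for each n, the selections from rows (n, k) give infinitely many sets from range (U n)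
  set g : ℕ → Set X := fun k => W (Nat.pair n k) (f (Nat.pair n k)) with hg
  have hginj : Function.Injective g := by
    intro k k' hkk'
    simp only [hg, hW, Nat.unpair_pair] at hkk'
    have h1 : Nat.pair k (f (Nat.pair n k)) = Nat.pair k' (f (Nat.pair n k')) :=
      hinj n (a₁ := Nat.pair k (f (Nat.pair n k)))
        (a₂ := Nat.pair k' (f (Nat.pair n k'))) hkk'
    have h3 := congrArg (fun p => (Nat.unpair p).1) h1
    simpa [Nat.unpair_pair] using h3
  apply Set.Infinite.mono (s := Set.range g)
  · rintro _ ⟨k, rfl⟩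
    constructor
    · exact ⟨Nat.pair n k, rfl⟩
    · exact ⟨s n (Nat.pair k (f (Nat.pair n k))), by simp [hg, hW, Nat.unpair_pair]⟩
  · exact Set.infinite_range_of_injective hginj
end

section
/- Let (X,d) be a metric space and 𝔅 a bornology on X with closed base. If the space C(X,ℝ) of continuous real-valued functions with the topology τ^s_𝔅 of strong uniform convergence on 𝔅 has countable strong fan tightness at the zero function, then X satisfies S₁(𝒪_{𝔅^s},𝒪_{𝔅^s}). -/
open Set Metric

variable {X : Type*} [MetricSpace X]

theorem statement11 (𝔅 : Set (Set X)) (h𝔅 : IsBorn 𝔅) (hcb : HasClosedBase 𝔅)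
    (hfan : ∀ A : ℕ → Set C(X, ℝ), (∀ n, SCl 𝔅 (A n) 0) →
      ∃ g : ℕ → C(X, ℝ), (∀ n, g n ∈ A n) ∧ SCl 𝔅 (Set.range g) 0) :
    ∀ 𝒰 : ℕ → Set (Set X), (∀ n, IsBsCover 𝔅 (𝒰 n)) →
      ∃ u : ℕ → Set X, (∀ n, u n ∈ 𝒰 n) ∧ IsBsCover 𝔅 (Set.range u) := by
  intro 𝒰 h𝒰
  set A : ℕ → Set C(X, ℝ) := fun n => {f | ∃ U ∈ 𝒰 n, ∀ x ∉ U, f x = 1} with hA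
  have hAcl : ∀ n, SCl 𝔅 (A n) 0 := by
    intro n B hB ε hε
    obtain ⟨U, hU, δ, hδ, hsub⟩ := (h𝒰 n).2.2.2 B hB
    have hBne : B.Nonempty := h𝔅.1 B hB
    refine ⟨⟨fun x => min 1 (max 0 ((2/δ) * (Metric.infDist x B - δ/2))), ?_⟩, ?_, ?_⟩
    · exact continuous_const.min (continuous_const.max
        (continuous_const.mul ((Metric.continuous_infDist_pt B).sub continuous_const)))
    · refine ⟨U, hU, fun x hx => ?_⟩
      have hd : δ ≤ Metric.infDist x B := le_of_not_gt fun h => by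
        obtain ⟨b, hb, hlt⟩ := (Metric.infDist_lt_iff hBne).1 h
        exact hx (hsub (Set.mem_biUnion hb (Metric.mem_ball.2 hlt)))
      have h1 : (1:ℝ) ≤ (2/δ) * (Metric.infDist x B - δ/2) := by
        have heq : (1:ℝ) = (2/δ) * (δ - δ/2) := by field_simp; ring
        rw [heq]
        apply mul_le_mul_of_nonneg_left (by linarith) (by positivity)
      show min 1 (max 0 ((2/δ) * (Metric.infDist x B - δ/2))) = 1
      rw [min_eq_left (le_max_of_le_right h1)]
    · refine ⟨δ/2, by positivity, fun x hx => ?_⟩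
      obtain ⟨b, hb, hxb⟩ := by simpa [enl, Metric.mem_ball] using hx
      have hlt : Metric.infDist x B < δ/2 :=
        lt_of_le_of_lt (Metric.infDist_le_dist_of_mem hb) hxb
      have h0 : (2/δ) * (Metric.infDist x B - δ/2) ≤ 0 :=
        mul_nonpos_of_nonneg_of_nonpos (by positivity) (by linarith)
      show |min 1 (max 0 ((2/δ) * (Metric.infDist x B - δ/2))) - (0:C(X,ℝ)) x| < ε
      rw [max_eq_left h0]
      simpa using hε
  obtain ⟨g, hg, hgcl⟩ := hfan A hAcl
  choose u hu hu1 using hg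
  refine ⟨u, hu, ?_, ?_, ?_, ?_⟩
  · rintro _ ⟨n, rfl⟩
    exact (h𝒰 n).1 _ (hu n)
  · rintro ⟨n, hn⟩
    exact (h𝒰 n).2.1 (hn ▸ hu n)
  · apply Set.eq_univ_of_forall
    intro x
    obtain ⟨B, hB, hxB⟩ := Set.mem_sUnion.1 (h𝔅.2.1 ▸ Set.mem_univ x)
    have hx𝔅 : {x} ∈ 𝔅 :=
      h𝔅.2.2.2 B hB {x} (Set.singleton_subset_iff.2 hxB) (Set.singleton_nonempty x)
    obtain ⟨f, ⟨n, rfl⟩, δ, hδ, hf⟩ := hgcl {x} hx𝔅 1 one_pos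
    have hxin : x ∈ enl {x} δ :=
      Set.mem_biUnion rfl (by simpa [Metric.mem_ball] using hδ)
    have hlt := hf x hxin
    refine Set.mem_sUnion.2 ⟨u n, ⟨n, rfl⟩, ?_⟩
    by_contra hxu
    rw [hu1 n x hxu] at hlt
    norm_num at hlt
  · intro B hB
    obtain ⟨f, ⟨n, rfl⟩, δ, hδ, hf⟩ := hgcl B hB 1 one_pos
    refine ⟨u n, ⟨n, rfl⟩, δ, hδ, fun x hx => ?_⟩
    by_contra hxu
    have hlt := hf x hx
    rw [hu1 n x hxu] at hlt
    norm_num at hlt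
end

section
/- Let (X,d) be a metric space and 𝔅 a bornology on X with closed base. If X satisfies S₁(𝒪_{𝔅^s},𝒪_{𝔅^s}), then C(X,ℝ) with the topology τ^s_𝔅 of strong uniform convergence on 𝔅 has countable strong fan tightness. -/
open Set Metric

variable {X : Type*} [MetricSpace X]

theorem statement12 (𝔅 : Set (Set X)) (h𝔅 : IsBorn 𝔅) (hcb : HasClosedBase 𝔅)
    (hsel : ∀ 𝒰 : ℕ → Set (Set X), (∀ n, IsBsCover 𝔅 (𝒰 n)) →
      ∃ u : ℕ → Set X, (∀ n, u n ∈ 𝒰 n) ∧ IsBsCover 𝔅 (Set.range u)) :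
    ∀ f : C(X, ℝ), ∀ A : ℕ → Set C(X, ℝ), (∀ n, SCl 𝔅 (A n) f) →
      ∃ g : ℕ → C(X, ℝ), (∀ n, g n ∈ A n) ∧ SCl 𝔅 (Set.range g) f := by
  intro f A hA
  by_cases hX : Nonempty X
  case neg =>
    exfalso
    have hempty : IsBsCover 𝔅 (∅ : Set (Set X)) := by
      refine ⟨fun U hU => absurd hU (notMem_empty U), notMem_empty _, ?_, ?_⟩
      · rw [Set.sUnion_empty]
        exact (Set.univ_eq_empty_iff.mpr (not_nonempty_iff.mp hX)).symm
      · intro B hB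
        exact absurd ⟨(h𝔅.1 B hB).choose⟩ hX
    obtain ⟨u, hu, -⟩ := hsel (fun _ => ∅) (fun _ => hempty)
    exact hu 0
  case pos =>
    have hsing : ∀ x : X, {x} ∈ 𝔅 := by
      intro x
      obtain ⟨-, hcov, -, hher⟩ := h𝔅
      have hx : x ∈ ⋃₀ 𝔅 := hcov ▸ mem_univ x
      obtain ⟨B, hB, hxB⟩ := hx
      exact hher B hB {x} (singleton_subset_iff.mpr hxB) ⟨x, rfl⟩
    have hAne : ∀ n, (A n).Nonempty := by
      intro n
      obtain ⟨x⟩ := hX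
      obtain ⟨g, hg, -⟩ := hA n {x} (hsing x) 1 one_pos
      exact ⟨g, hg⟩
    -- key lemma
    have key : ∀ η : ℝ, 0 < η → ∀ σ : ℕ → ℕ, ∃ G : ℕ → C(X, ℝ),
        (∀ k, G k ∈ A (σ k)) ∧ ∀ B ∈ 𝔅, ∃ k, SNbhd B η f (G k) := by
      intro η hη σ
      by_cases hcase : ∃ k, ∃ h ∈ A (σ k), ∀ x, |h x - f x| < η
      · obtain ⟨k₀, h, hhA, hh⟩ := hcase
        refine ⟨fun k => if k = k₀ then h else (hAne (σ k)).choose, ?_, ?_⟩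
        · intro k
          by_cases hk : k = k₀
          · subst hk; simpa using hhA
          · simpa [hk] using (hAne (σ k)).choose_spec
        · intro B hB
          refine ⟨k₀, 1, one_pos, ?_⟩
          intro x _
          simpa using hh x
      · push_neg at hcase
        set 𝒰 : ℕ → Set (Set X) :=
          fun k => (fun h : C(X, ℝ) => {x | |h x - f x| < η}) '' (A (σ k)) with h𝒰
        have hcov : ∀ k, IsBsCover 𝔅 (𝒰 k) := by
          intro k
          refine ⟨?_, ?_, ?_, ?_⟩
          · rintro U ⟨h, -, rfl⟩
            exact isOpen_lt ((h.continuous.sub f.continuous).abs) continuous_const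
          · rintro ⟨h, hh, hU⟩
            obtain ⟨x, hx⟩ := hcase k h hh
            have hmem : x ∈ (univ : Set X) := mem_univ x
            rw [← hU] at hmem
            exact absurd hmem (not_lt.mpr hx)
          · apply eq_univ_of_forall
            intro x
            obtain ⟨h, hh, δ, hδ, hcl⟩ := hA (σ k) {x} (hsing x) η hη
            refine ⟨_, ⟨h, hh, rfl⟩, hcl x ?_⟩
            simp only [enl, mem_iUnion]
            exact ⟨x, rfl, mem_ball_self hδ⟩
          · intro B hB
            obtain ⟨h, hh, δ, hδ, hcl⟩ := hA (σ k) B hB η hη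
            exact ⟨_, ⟨h, hh, rfl⟩, δ, hδ, fun x hx => hcl x hx⟩
        obtain ⟨u, hu, -, -, -, hstr⟩ := hsel 𝒰 hcov
        choose h hhA hhe using hu
        refine ⟨h, hhA, ?_⟩
        intro B hB
        obtain ⟨U, hU, δ, hδ, hsub⟩ := hstr B hB
        obtain ⟨k, rfl⟩ := hU
        refine ⟨k, δ, hδ, fun x hx => ?_⟩
        have hxu : x ∈ u k := hsub hx
        rw [← hhe k] at hxu
        exact hxu
    obtain ⟨e⟩ : Nonempty (ℕ × ℕ ≃ ℕ) := ⟨Denumerable.eqv (ℕ × ℕ)⟩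
    choose G hG1 hG2 using fun m : ℕ =>
      key (1 / ((m : ℝ) + 1)) (by positivity) (fun k => e (m, k))
    refine ⟨fun j => G (e.symm j).1 (e.symm j).2, ?_, ?_⟩
    · intro j
      have := hG1 (e.symm j).1 (e.symm j).2
      simpa using this
    · intro B hB ε hε
      obtain ⟨m, hm⟩ := exists_nat_one_div_lt hε
      obtain ⟨k, δ, hδ, hcl⟩ := hG2 m B hB
      refine ⟨G m k, ⟨e (m, k), by simp⟩, δ, hδ, fun x hx => ?_⟩
      exact lt_trans (hcl x hx) hm
end

section
/- Let (X,d) be a metric space and 𝔅 a bornology on X. If C(X,ℝ) with the topology τ^s_𝔅 is strictly Fréchet–Urysohn, then X satisfies S₁(𝒪_{𝔅^s},Γ_{𝔅^s}): for every sequence (𝒰_n) of 𝔅^s-covers of X one can choose U_n ∈ 𝒰_n so that {U_n : n ∈ ℕ} is a γ_{𝔅^s}-cover of X. -/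
open Set Metric

variable {X : Type*} [MetricSpace X]

theorem statement14 (𝔅 : Set (Set X)) (h𝔅 : IsBorn 𝔅)
    (hSFU : ∀ f : C(X, ℝ), ∀ A : ℕ → Set C(X, ℝ), (∀ n, SCl 𝔅 (A n) f) →
      ∃ g : ℕ → C(X, ℝ), (∀ n, g n ∈ A n) ∧ SConv 𝔅 g f) :
    ∀ 𝒰 : ℕ → Set (Set X), (∀ n, IsBsCover 𝔅 (𝒰 n)) →
      ∃ u : ℕ → Set X, (∀ n, u n ∈ 𝒰 n) ∧ IsGammaCover 𝔅 u := by
  classical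
  intro 𝒰 h𝒰
  obtain ⟨hne, hcov, hun, hher⟩ := h𝔅
  have hsing : ∀ x : X, ({x} : Set X) ∈ 𝔅 := by
    intro x
    have hx : x ∈ ⋃₀ 𝔅 := hcov ▸ mem_univ x
    obtain ⟨B, hB, hxB⟩ := hx
    exact hher B hB {x} (singleton_subset_iff.2 hxB) (singleton_nonempty x)
  set A : ℕ → Set C(X, ℝ) := fun n => {f | ∃ U ∈ 𝒰 n, ∀ x ∉ U, f x = 1} with hA
  have hcl : ∀ n, SCl 𝔅 (A n) 0 := by
    intro n B hB ε hε
    obtain ⟨U, hU, δ, hδ, hsub⟩ := (h𝒰 n).2.2.2 B hB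
    have hBne : B.Nonempty := hne B hB
    have hcont : Continuous fun x : X => min 1 (max 0 (3 * Metric.infDist x B / δ - 1)) := by
      apply continuous_const.min
      apply continuous_const.max
      exact ((continuous_const.mul (Metric.continuous_infDist_pt B)).div_const δ).sub
        continuous_const
    refine ⟨⟨fun x => min 1 (max 0 (3 * Metric.infDist x B / δ - 1)), hcont⟩, ?_, ?_⟩
    · refine ⟨U, hU, fun x hx => ?_⟩
      have hxe : x ∉ enl B δ := fun h => hx (hsub h)
      have ht : δ ≤ Metric.infDist x B := by
        by_contra h
        push_neg at h
        obtain ⟨b, hb, hd⟩ := (Metric.infDist_lt_iff hBne).1 h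
        exact hxe (mem_iUnion₂.2 ⟨b, hb, Metric.mem_ball.2 hd⟩)
      have h1 : (1 : ℝ) ≤ max 0 (3 * Metric.infDist x B / δ - 1) := by
        refine le_max_of_le_right ?_
        have : (2 : ℝ) ≤ 3 * Metric.infDist x B / δ := by
          rw [le_div_iff₀ hδ]; nlinarith
        linarith
      simpa using min_eq_left h1
    · refine ⟨δ / 3, by positivity, fun x hx => ?_⟩
      obtain ⟨b, hb, hd⟩ := mem_iUnion₂.1 hx
      have ht : Metric.infDist x B < δ / 3 :=
        lt_of_le_of_lt (Metric.infDist_le_dist_of_mem hb) (Metric.mem_ball.1 hd)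
      have h0 : 3 * Metric.infDist x B / δ - 1 ≤ 0 := by
        have h1 : 3 * Metric.infDist x B / δ < 1 := by
          rw [div_lt_one hδ]
          have h0' : 0 ≤ Metric.infDist x B := Metric.infDist_nonneg
          linarith
        linarith
      have : max 0 (3 * Metric.infDist x B / δ - 1) = 0 := max_eq_left h0
      simp only [ContinuousMap.coe_mk, ContinuousMap.zero_apply, this, sub_zero]
      rw [min_eq_right (by norm_num : (0:ℝ) ≤ 1)]
      simpa using hε
  obtain ⟨g, hg, hconv⟩ := hSFU 0 A hcl
  choose u hu h1 using hg
  have hkey : ∀ B ∈ 𝔅, ∃ n₀ : ℕ, ∃ δ : ℕ → ℝ, ∀ n ≥ n₀, 0 < δ n ∧ enl B (δ n) ⊆ u n := by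
    intro B hB
    obtain ⟨N, hN⟩ := hconv B hB (1/2) (by norm_num)
    have h' : ∀ m : ℕ, SNbhd B (1/2) 0 (g (m + N)) := fun m => hN (m + N) (Nat.le_add_left N m)
    choose δ hδpos hδ using h'
    refine ⟨N, fun n => δ (n - N), fun n hn => ⟨hδpos (n - N), fun x hx => ?_⟩⟩
    have hnn : n - N + N = n := Nat.sub_add_cancel hn
    by_contra hxU
    have h2 := hδ (n - N) x hx
    rw [hnn] at h2
    rw [h1 n x hxU] at h2
    norm_num at h2
  refine ⟨u, hu, fun n => (h𝒰 n).1 (u n) (hu n), ?_, ?_, hkey⟩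
  · refine eq_univ_of_forall fun x => ?_
    obtain ⟨n₀, δ, h⟩ := hkey {x} (hsing x)
    obtain ⟨hpos, hsub⟩ := h n₀ le_rfl
    exact mem_iUnion.2 ⟨n₀, hsub (mem_iUnion₂.2 ⟨x, rfl, Metric.mem_ball_self hpos⟩)⟩
  · by_contra hfin
    rw [Set.not_infinite] at hfin
    have hfib : ∃ V ∈ range u, {n | u n = V}.Infinite := by
      by_contra h
      push_neg at h
      have hsubu : (Set.univ : Set ℕ) ⊆ ⋃ V ∈ range u, {n | u n = V} :=
        fun n _ => mem_iUnion₂.2 ⟨u n, mem_range_self n, rfl⟩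
      exact Set.infinite_univ
        ((Set.Finite.biUnion hfin (fun V hV => h V hV)).subset hsubu)
    obtain ⟨V, hVr, hVinf⟩ := hfib
    have hVuniv : V = Set.univ := by
      refine eq_univ_of_forall fun x => ?_
      obtain ⟨n₀, δ, h⟩ := hkey {x} (hsing x)
      obtain ⟨n, hn, hngt⟩ := hVinf.exists_gt n₀
      obtain ⟨hpos, hsub⟩ := h n (le_of_lt hngt)
      have : x ∈ u n := hsub (mem_iUnion₂.2 ⟨x, rfl, Metric.mem_ball_self hpos⟩)
      rwa [hn] at this
    obtain ⟨m, hm⟩ := hVr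
    exact (h𝒰 m).2.1 (by rw [← hVuniv, ← hm]; exact hu m)
end

section
/- Let (X,d) be a metric space and 𝔅 a bornology on X with closed base. If X satisfies S₁(𝒪_{𝔅^s},Γ_{𝔅^s}), then C(X,ℝ) with the topology τ^s_𝔅 is strictly Fréchet–Urysohn at the zero function. -/
open Set Metric

variable {X : Type*} [MetricSpace X]

theorem statement15 (𝔅 : Set (Set X)) (h𝔅 : IsBorn 𝔅) (hcb : HasClosedBase 𝔅)
    (hsel : ∀ 𝒰 : ℕ → Set (Set X), (∀ n, IsBsCover 𝔅 (𝒰 n)) →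
      ∃ u : ℕ → Set X, (∀ n, u n ∈ 𝒰 n) ∧ IsGammaCover 𝔅 u) :
    ∀ A : ℕ → Set C(X, ℝ), (∀ n, SCl 𝔅 (A n) 0) →
      ∃ g : ℕ → C(X, ℝ), (∀ n, g n ∈ A n) ∧ SConv 𝔅 g 0 := by
  classical
  intro A hA
  -- the set of "degenerate" indices where some function is globally small
  set S : Set ℕ := {n | ∃ f ∈ A n, ∀ x, |f x| < 1 / (n + 1)} with hSdef
  -- basic monotonicity fact
  have hmono : ∀ (N n : ℕ), N ≤ n → (1 : ℝ) / (n + 1) ≤ 1 / (N + 1) := by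
    intro N n h
    apply one_div_le_one_div_of_le (by positivity)
    exact_mod_cast Nat.succ_le_succ h
  by_cases hcase : ∀ n, n ∈ S
  · -- every A n contains a globally 1/(n+1)-small function
    choose f hf1 hf2 using hcase
    refine ⟨f, hf1, ?_⟩
    intro B hB ε hε
    obtain ⟨N, hN⟩ := exists_nat_one_div_lt hε
    refine ⟨N, fun n hn => ⟨1, one_pos, fun x _ => ?_⟩⟩
    have h1 : |f n x| < 1 / (n + 1) := hf2 n x
    have : |f n x| < ε := lt_of_lt_of_le h1 (le_of_lt (lt_of_le_of_lt (hmono N n hn) hN))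
    simpa using this
  · push_neg at hcase
    obtain ⟨m, hm⟩ := hcase
    -- the candidate covers
    set C : ℕ → Set (Set X) :=
      fun j => {U | ∃ f ∈ A j, U = {x | |f x| < 1 / (j + 1)}} with hCdef
    have hcover : ∀ j, j ∉ S → IsBsCover 𝔅 (C j) := by
      intro j hj
      refine ⟨?_, ?_, ?_, ?_⟩
      · rintro U ⟨f, -, rfl⟩
        exact isOpen_lt f.continuous.abs continuous_const
      · rintro ⟨f, hf, hU⟩
        exact hj ⟨f, hf, fun x => by
          have : x ∈ ({x | |f x| < 1 / (j + 1)} : Set X) := hU ▸ Set.mem_univ x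
          exact this⟩
      · apply Set.eq_univ_iff_forall.2
        intro x
        have hx : x ∈ ⋃₀ 𝔅 := h𝔅.2.1 ▸ Set.mem_univ x
        obtain ⟨B, hB, hxB⟩ := hx
        have hx𝔅 : ({x} : Set X) ∈ 𝔅 :=
          h𝔅.2.2.2 B hB {x} (Set.singleton_subset_iff.2 hxB) ⟨x, rfl⟩
        obtain ⟨g, hg, δ, hδ, hgx⟩ := hA j {x} hx𝔅 (1 / (j + 1)) (by positivity)
        refine ⟨{y | |g y| < 1 / (j + 1)}, ⟨g, hg, rfl⟩, ?_⟩
        have hxe : x ∈ enl {x} δ := by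
          simp only [enl, Set.mem_iUnion]
          exact ⟨x, rfl, Metric.mem_ball_self hδ⟩
        simpa using hgx x hxe
      · intro B hB
        obtain ⟨g, hg, δ, hδ, hgx⟩ := hA j B hB (1 / (j + 1)) (by positivity)
        refine ⟨{y | |g y| < 1 / (j + 1)}, ⟨g, hg, rfl⟩, δ, hδ, fun x hx => ?_⟩
        simpa using hgx x hx
    -- apply selection to the sequence of covers (with dummy `C m` for degenerate n)
    set k : ℕ → ℕ := fun n => if n ∈ S then m else n with hkdef
    have hck : ∀ n, IsBsCover 𝔅 (C (k n)) := by
      intro n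
      by_cases h : n ∈ S
      · simp only [hkdef, if_pos h]; exact hcover m hm
      · simp only [hkdef, if_neg h]; exact hcover n h
    obtain ⟨u, huU, hγ⟩ := hsel (fun n => C (k n)) hck
    -- choose the functions
    have hchoice : ∀ n, ∃ f ∈ A n,
        (n ∈ S → ∀ x, |f x| < 1 / (n + 1)) ∧
        (n ∉ S → u n = {x | |f x| < 1 / (n + 1)}) := by
      intro n
      by_cases h : n ∈ S
      · obtain ⟨f, hf1, hf2⟩ := id h
        exact ⟨f, hf1, fun _ => hf2, fun h' => absurd h h'⟩
      · have hu : u n ∈ C n := by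
          have := huU n
          simpa only [hkdef, if_neg h] using this
        obtain ⟨f, hf1, hf2⟩ := hu
        exact ⟨f, hf1, fun h' => absurd h' h, fun _ => hf2⟩
    choose g hg1 hg2 using hchoice
    refine ⟨g, hg1, ?_⟩
    intro B hB ε hε
    obtain ⟨n₀, δ, hδ⟩ := hγ.2.2.2 B hB
    obtain ⟨N', hN'⟩ := exists_nat_one_div_lt hε
    refine ⟨max n₀ N', fun n hn => ?_⟩
    have hn₀ : n₀ ≤ n := le_trans (le_max_left _ _) hn
    have hN'n : N' ≤ n := le_trans (le_max_right _ _) hn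
    have hsmall : (1 : ℝ) / (n + 1) < ε := lt_of_le_of_lt (hmono N' n hN'n) hN'
    by_cases h : n ∈ S
    · refine ⟨1, one_pos, fun x _ => ?_⟩
      have := (hg2 n).1 h x
      simpa using lt_trans this hsmall
    · obtain ⟨hδpos, hδsub⟩ := hδ n hn₀
      refine ⟨δ n, hδpos, fun x hx => ?_⟩
      have hxu : x ∈ u n := hδsub hx
      rw [(hg2 n).2 h] at hxu
      simpa using lt_trans hxu hsmall
end
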